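/- Let p ≥ 2 be even and G=(V,E) a (p,2)-flex-connected graph with unsafe edge set U. If A and B are crossing (p,3)-violated sets and all four corner cuts δ(A∪B), δ(A∩B), δ(A\B), δ(B\A) have cardinality p+2, then E(A\B, B\A) and E(A∩B, V\(A∪B)) are empty, each of the four sets E(A∩B,A\B), E(A∩B,B\A), E(A\B,V\(A∪B)), E(B\A,V\(A∪B)) has cardinality p/2+1, and at least two of the four corner sets A∪B, A∩B, A\B, B\A are (p,3)-violated. -/

import Mathlib

open Finset

variable {V E : Type}

instance {a b : Prop} [Decidable a] [Decidable b] : Decidable (Xor' a b) := by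
  unfold Xor'; infer_instance

/-- The cut of a vertex set `S`: edges with exactly one endpoint in `S`. -/
def cutOf [Fintype E] [DecidableEq V] (ends : E → V × V) (S : Finset V) : Finset E :=
  Finset.univ.filter (fun e => Xor' ((ends e).1 ∈ S) ((ends e).2 ∈ S))

/-- Edges with one endpoint in `X` and the other in `Y`. -/
def btw [Fintype E] [DecidableEq V] (ends : E → V × V) (X Y : Finset V) : Finset E :=
  Finset.univ.filter (fun e =>
    ((ends e).1 ∈ X ∧ (ends e).2 ∈ Y) ∨ ((ends e).1 ∈ Y ∧ (ends e).2 ∈ X))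

/-- `A` and `B` cross. -/
def crosses [Fintype V] [DecidableEq V] (A B : Finset V) : Prop :=
  (A \ B).Nonempty ∧ (A ∩ B).Nonempty ∧ (B \ A).Nonempty ∧ ((A ∪ B)ᶜ).Nonempty

/-- `(p,2)`-flex-connectivity: after removing any at most 2 unsafe edges,
every nonempty proper cut has at least `p` edges. -/
def flexConn [Fintype V] [Fintype E] [DecidableEq V] [DecidableEq E]
    (p : ℕ) (ends : E → V × V) (U : Finset E) : Prop :=
  ∀ F ⊆ U, F.card ≤ 2 → ∀ S : Finset V, S.Nonempty → S ≠ Finset.univ →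
    p ≤ (cutOf ends S \ F).card

/-- A `(p,3)`-violated set: its cut has exactly `p+2` edges, at least 3 unsafe. -/
def violatedSet [Fintype E] [DecidableEq V] [DecidableEq E]
    (p : ℕ) (ends : E → V × V) (U : Finset E) (S : Finset V) : Prop :=
  (cutOf ends S).card = p + 2 ∧ 3 ≤ (cutOf ends S ∩ U).card

instance [Fintype E] [DecidableEq V] [DecidableEq E]
    (p : ℕ) (ends : E → V × V) (U : Finset E) (S : Finset V) :
    Decidable (violatedSet p ends U S) := by unfold violatedSet; infer_instance

/-- `A` amenably crosses `B`. -/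
def amenablyCrosses [Fintype V] [Fintype E] [DecidableEq V] [DecidableEq E]
    (ends : E → V × V) (U : Finset E) (A B : Finset V) : Prop :=
  crosses A B ∧
    (btw ends (A ∩ B) (B \ A) ∩ U = ∅ ∨ btw ends (A \ B) (A ∪ B)ᶜ ∩ U = ∅)

lemma btw_comm [Fintype E] [DecidableEq V] (ends : E → V × V) (X Y : Finset V) :
    btw ends X Y = btw ends Y X := by
  ext e; simp only [_root_.btw, mem_filter, mem_univ, true_and]; tauto

lemma btw_disj [Fintype E] [DecidableEq V] [DecidableEq E] (ends : E → V × V)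
    {X Y Z : Finset V} (W : Finset V) (hZX : Disjoint Z X) (hZY : Disjoint Z Y) :
    Disjoint (btw ends X Y) (btw ends Z W) := by
  rw [Finset.disjoint_left]
  intro e he he'
  simp only [_root_.btw, mem_filter, mem_univ, true_and] at he he'
  have h1 := Finset.disjoint_left.mp hZX
  have h2 := Finset.disjoint_left.mp hZY
  tauto

lemma btw_disj' [Fintype E] [DecidableEq V] [DecidableEq E] (ends : E → V × V)
    {X Y W : Finset V} (Z : Finset V) (hWX : Disjoint W X) (hWY : Disjoint W Y) :
    Disjoint (btw ends X Y) (btw ends Z W) := by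
  rw [btw_comm ends Z W]; exact btw_disj ends Z hWX hWY

lemma part_disj [Fintype V] [DecidableEq V] (A B : Finset V) :
    Disjoint (A \ B) (A ∩ B) ∧ Disjoint (A \ B) (B \ A) ∧ Disjoint (A \ B) ((A ∪ B)ᶜ) ∧
    Disjoint (A ∩ B) (B \ A) ∧ Disjoint (A ∩ B) ((A ∪ B)ᶜ) ∧ Disjoint (B \ A) ((A ∪ B)ᶜ) := by
  refine ⟨?_, ?_, ?_, ?_, ?_, ?_⟩ <;>
  · rw [Finset.disjoint_left]
    intro x hx hx'
    simp only [mem_sdiff, mem_inter, Finset.mem_compl, mem_union] at hx hx'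
    tauto

lemma card_union3 [DecidableEq E] {s t u : Finset E}
    (h1 : Disjoint s t) (h2 : Disjoint s u) (h3 : Disjoint t u) :
    (s ∪ t ∪ u).card = s.card + t.card + u.card := by
  rw [Finset.card_union_of_disjoint (Finset.disjoint_union_left.mpr ⟨h2, h3⟩),
    Finset.card_union_of_disjoint h1]

lemma card_union4 [DecidableEq E] {s t u v : Finset E}
    (h1 : Disjoint s t) (h2 : Disjoint s u) (h3 : Disjoint s v)
    (h4 : Disjoint t u) (h5 : Disjoint t v) (h6 : Disjoint u v) :
    (s ∪ t ∪ u ∪ v).card = s.card + t.card + u.card + v.card := by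
  rw [Finset.card_union_of_disjoint
      (Finset.disjoint_union_left.mpr ⟨Finset.disjoint_union_left.mpr ⟨h3, h5⟩, h6⟩),
    card_union3 h1 h2 h4]

lemma cutA_decomp [Fintype V] [Fintype E] [DecidableEq V] [DecidableEq E] (ends : E → V × V) (A B : Finset V) :
    cutOf ends (A) = btw ends (A \ B) (B \ A) ∪ btw ends (A \ B) (A ∪ B)ᶜ ∪ btw ends (A ∩ B) (B \ A) ∪ btw ends (A ∩ B) (A ∪ B)ᶜ := by
  ext e
  rw [cutOf, Finset.mem_filter]
  simp only [cutOf, _root_.btw, mem_filter, mem_univ, true_and, mem_union, mem_sdiff, mem_inter,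
    Finset.mem_compl, Xor']
  by_cases hxA : (ends e).1 ∈ A <;> by_cases hxB : (ends e).1 ∈ B <;>
    by_cases hyA : (ends e).2 ∈ A <;> by_cases hyB : (ends e).2 ∈ B <;>
    simp [hxA, hxB, hyA, hyB]

lemma cutB_decomp [Fintype V] [Fintype E] [DecidableEq V] [DecidableEq E] (ends : E → V × V) (A B : Finset V) :
    cutOf ends (B) = btw ends (A ∩ B) (A \ B) ∪ btw ends (A \ B) (B \ A) ∪ btw ends (A ∩ B) (A ∪ B)ᶜ ∪ btw ends (B \ A) (A ∪ B)ᶜ := by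
  ext e
  rw [cutOf, Finset.mem_filter]
  simp only [cutOf, _root_.btw, mem_filter, mem_univ, true_and, mem_union, mem_sdiff, mem_inter,
    Finset.mem_compl, Xor']
  by_cases hxA : (ends e).1 ∈ A <;> by_cases hxB : (ends e).1 ∈ B <;>
    by_cases hyA : (ends e).2 ∈ A <;> by_cases hyB : (ends e).2 ∈ B <;>
    simp [hxA, hxB, hyA, hyB]

lemma cutU_decomp [Fintype V] [Fintype E] [DecidableEq V] [DecidableEq E] (ends : E → V × V) (A B : Finset V) :
    cutOf ends (A ∪ B) = btw ends (A \ B) (A ∪ B)ᶜ ∪ btw ends (A ∩ B) (A ∪ B)ᶜ ∪ btw ends (B \ A) (A ∪ B)ᶜ := by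
  ext e
  simp only [cutOf, _root_.btw, mem_filter, mem_univ, true_and, mem_union, mem_sdiff, mem_inter,
    Finset.mem_compl, Xor']
  by_cases hxA : (ends e).1 ∈ A <;> by_cases hxB : (ends e).1 ∈ B <;>
    by_cases hyA : (ends e).2 ∈ A <;> by_cases hyB : (ends e).2 ∈ B <;>
    simp [hxA, hxB, hyA, hyB]

lemma cutI_decomp [Fintype V] [Fintype E] [DecidableEq V] [DecidableEq E] (ends : E → V × V) (A B : Finset V) :
    cutOf ends (A ∩ B) = btw ends (A ∩ B) (A \ B) ∪ btw ends (A ∩ B) (B \ A) ∪ btw ends (A ∩ B) (A ∪ B)ᶜ := by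
  ext e
  simp only [cutOf, _root_.btw, mem_filter, mem_univ, true_and, mem_union, mem_sdiff, mem_inter,
    Finset.mem_compl, Xor']
  by_cases hxA : (ends e).1 ∈ A <;> by_cases hxB : (ends e).1 ∈ B <;>
    by_cases hyA : (ends e).2 ∈ A <;> by_cases hyB : (ends e).2 ∈ B <;>
    simp [hxA, hxB, hyA, hyB]

lemma cutD_decomp [Fintype V] [Fintype E] [DecidableEq V] [DecidableEq E] (ends : E → V × V) (A B : Finset V) :
    cutOf ends (A \ B) = btw ends (A ∩ B) (A \ B) ∪ btw ends (A \ B) (B \ A) ∪ btw ends (A \ B) (A ∪ B)ᶜ := by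
  ext e
  simp only [cutOf, _root_.btw, mem_filter, mem_univ, true_and, mem_union, mem_sdiff, mem_inter,
    Finset.mem_compl, Xor']
  by_cases hxA : (ends e).1 ∈ A <;> by_cases hxB : (ends e).1 ∈ B <;>
    by_cases hyA : (ends e).2 ∈ A <;> by_cases hyB : (ends e).2 ∈ B <;>
    simp [hxA, hxB, hyA, hyB]

lemma cutE_decomp [Fintype V] [Fintype E] [DecidableEq V] [DecidableEq E] (ends : E → V × V) (A B : Finset V) :
    cutOf ends (B \ A) = btw ends (A \ B) (B \ A) ∪ btw ends (A ∩ B) (B \ A) ∪ btw ends (B \ A) (A ∪ B)ᶜ := by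
  ext e
  simp only [cutOf, _root_.btw, mem_filter, mem_univ, true_and, mem_union, mem_sdiff, mem_inter,
    Finset.mem_compl, Xor']
  by_cases hxA : (ends e).1 ∈ A <;> by_cases hxB : (ends e).1 ∈ B <;>
    by_cases hyA : (ends e).2 ∈ A <;> by_cases hyB : (ends e).2 ∈ B <;>
    simp [hxA, hxB, hyA, hyB]

set_option maxHeartbeats 1000000 in
theorem stmt8 [Fintype V] [Fintype E] [DecidableEq V] [DecidableEq E]
    (p : ℕ) (hp : 2 ≤ p) (heven : Even p) (ends : E → V × V) (U : Finset E)
    (hflex : flexConn p ends U) (A B : Finset V)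
    (hA : violatedSet p ends U A) (hB : violatedSet p ends U B)
    (hcross : crosses A B)
    (h1 : (cutOf ends (A ∪ B)).card = p + 2) (h2 : (cutOf ends (A ∩ B)).card = p + 2)
    (h3 : (cutOf ends (A \ B)).card = p + 2) (h4 : (cutOf ends (B \ A)).card = p + 2) :
    btw ends (A \ B) (B \ A) = ∅ ∧
    btw ends (A ∩ B) (A ∪ B)ᶜ = ∅ ∧
    (btw ends (A ∩ B) (A \ B)).card = p / 2 + 1 ∧
    (btw ends (A ∩ B) (B \ A)).card = p / 2 + 1 ∧
    (btw ends (A \ B) (A ∪ B)ᶜ).card = p / 2 + 1 ∧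
    (btw ends (B \ A) (A ∪ B)ᶜ).card = p / 2 + 1 ∧
    2 ≤ ((if violatedSet p ends U (A ∪ B) then 1 else 0) +
      (if violatedSet p ends U (A ∩ B) then 1 else 0) +
      (if violatedSet p ends U (A \ B) then 1 else 0) +
      (if violatedSet p ends U (B \ A) then 1 else 0) : ℕ) := by
  classical
  obtain ⟨hAc, hAu⟩ := hA
  obtain ⟨hBc, hBu⟩ := hB
  obtain ⟨q12, q13, q14, q23, q24, q34⟩ := part_disj A B
  have eA := cutA_decomp ends A B
  have eB := cutB_decomp ends A B
  have eU := cutU_decomp ends A B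
  have eI := cutI_decomp ends A B
  have eD := cutD_decomp ends A B
  have eE := cutE_decomp ends A B
  set b12 : Finset E := btw ends (A ∩ B) (A \ B) with hb12
  set b13 : Finset E := btw ends (A \ B) (B \ A) with hb13
  set b14 : Finset E := btw ends (A \ B) (A ∪ B)ᶜ with hb14
  set b23 : Finset E := btw ends (A ∩ B) (B \ A) with hb23
  set b24 : Finset E := btw ends (A ∩ B) (A ∪ B)ᶜ with hb24
  set b34 : Finset E := btw ends (B \ A) (A ∪ B)ᶜ with hb34
  have D12_13 : Disjoint b12 b13 := btw_disj' ends _ q23.symm q13.symm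
  have D12_14 : Disjoint b12 b14 := btw_disj' ends _ q24.symm q14.symm
  have D12_23 : Disjoint b12 b23 := btw_disj' ends _ q23.symm q13.symm
  have D12_24 : Disjoint b12 b24 := btw_disj' ends _ q24.symm q14.symm
  have D12_34 : Disjoint b12 b34 := btw_disj ends _ q23.symm q13.symm
  have D13_14 : Disjoint b13 b14 := btw_disj' ends _ q14.symm q34.symm
  have D13_23 : Disjoint b13 b23 := btw_disj ends _ q12.symm q23
  have D13_24 : Disjoint b13 b24 := btw_disj ends _ q12.symm q23
  have D13_34 : Disjoint b13 b34 := btw_disj' ends _ q14.symm q34.symm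
  have D14_23 : Disjoint b14 b23 := btw_disj ends _ q12.symm q24
  have D14_24 : Disjoint b14 b24 := btw_disj ends _ q12.symm q24
  have D14_34 : Disjoint b14 b34 := btw_disj ends _ q13.symm q34
  have D23_24 : Disjoint b23 b24 := btw_disj' ends _ q24.symm q34.symm
  have D23_34 : Disjoint b23 b34 := btw_disj' ends _ q24.symm q34.symm
  have D24_34 : Disjoint b24 b34 := btw_disj ends _ q23.symm q34
  clear_value b12 b13 b14 b23 b24 b34
  have cA : b13.card + b14.card + b23.card + b24.card = p + 2 := by
    rw [← card_union4 D13_14 D13_23 D13_24 D14_23 D14_24 D23_24, ← eA, hAc]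
  have cB : b12.card + b13.card + b24.card + b34.card = p + 2 := by
    rw [← card_union4 D12_13 D12_24 D12_34 D13_24 D13_34 D24_34, ← eB, hBc]
  have cU : b14.card + b24.card + b34.card = p + 2 := by
    rw [← card_union3 D14_24 D14_34 D24_34, ← eU, h1]
  have cI : b12.card + b23.card + b24.card = p + 2 := by
    rw [← card_union3 D12_23 D12_24 D23_24, ← eI, h2]
  have cD : b12.card + b13.card + b14.card = p + 2 := by
    rw [← card_union3 D12_13 D12_14 D13_14, ← eD, h3]
  have cE : b13.card + b23.card + b34.card = p + 2 := by
    rw [← card_union3 D13_23 D13_34 D23_34, ← eE, h4]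
  obtain ⟨k, hk⟩ := heven
  have z13 : b13.card = 0 := by clear hflex hcross hAu hBu hAc hBc h1 h2 h3 h4 eA eB eU eI eD eE; omega
  have z24 : b24.card = 0 := by clear hflex hcross hAu hBu hAc hBc h1 h2 h3 h4 eA eB eU eI eD eE; omega
  have v12 : b12.card = p / 2 + 1 := by clear hflex hcross hAu hBu hAc hBc h1 h2 h3 h4 eA eB eU eI eD eE; omega
  have v14 : b14.card = p / 2 + 1 := by clear hflex hcross hAu hBu hAc hBc h1 h2 h3 h4 eA eB eU eI eD eE; omega
  have v23 : b23.card = p / 2 + 1 := by clear hflex hcross hAu hBu hAc hBc h1 h2 h3 h4 eA eB eU eI eD eE; omega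
  have v34 : b34.card = p / 2 + 1 := by clear hflex hcross hAu hBu hAc hBc h1 h2 h3 h4 eA eB eU eI eD eE; omega
  have z13' : b13 = ∅ := Finset.card_eq_zero.mp z13
  have z24' : b24 = ∅ := Finset.card_eq_zero.mp z24
  rw [z13'] at eA eB eD eE
  rw [z24'] at eA eB eU eI
  simp only [empty_union, union_empty] at eA eB eU eI eD eE
  have uA : (cutOf ends A ∩ U).card = (b14 ∩ U).card + (b23 ∩ U).card := by
    rw [eA, Finset.union_inter_distrib_right,
      Finset.card_union_of_disjoint (D14_23.mono inter_subset_left inter_subset_left)]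
  have uB : (cutOf ends B ∩ U).card = (b12 ∩ U).card + (b34 ∩ U).card := by
    rw [eB, Finset.union_inter_distrib_right,
      Finset.card_union_of_disjoint (D12_34.mono inter_subset_left inter_subset_left)]
  have uU : (cutOf ends (A ∪ B) ∩ U).card = (b14 ∩ U).card + (b34 ∩ U).card := by
    rw [eU, Finset.union_inter_distrib_right,
      Finset.card_union_of_disjoint (D14_34.mono inter_subset_left inter_subset_left)]
  have uI : (cutOf ends (A ∩ B) ∩ U).card = (b12 ∩ U).card + (b23 ∩ U).card := by
    rw [eI, Finset.union_inter_distrib_right,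
      Finset.card_union_of_disjoint (D12_23.mono inter_subset_left inter_subset_left)]
  have uD : (cutOf ends (A \ B) ∩ U).card = (b12 ∩ U).card + (b14 ∩ U).card := by
    rw [eD, Finset.union_inter_distrib_right,
      Finset.card_union_of_disjoint (D12_14.mono inter_subset_left inter_subset_left)]
  have uE : (cutOf ends (B \ A) ∩ U).card = (b23 ∩ U).card + (b34 ∩ U).card := by
    rw [eE, Finset.union_inter_distrib_right,
      Finset.card_union_of_disjoint (D23_34.mono inter_subset_left inter_subset_left)]
  rw [uA] at hAu
  rw [uB] at hBu
  have vU : violatedSet p ends U (A ∪ B) ↔ 3 ≤ (b14 ∩ U).card + (b34 ∩ U).card := by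
    unfold violatedSet; rw [h1, uU]; simp
  have vI : violatedSet p ends U (A ∩ B) ↔ 3 ≤ (b12 ∩ U).card + (b23 ∩ U).card := by
    unfold violatedSet; rw [h2, uI]; simp
  have vD : violatedSet p ends U (A \ B) ↔ 3 ≤ (b12 ∩ U).card + (b14 ∩ U).card := by
    unfold violatedSet; rw [h3, uD]; simp
  have vE : violatedSet p ends U (B \ A) ↔ 3 ≤ (b23 ∩ U).card + (b34 ∩ U).card := by
    unfold violatedSet; rw [h4, uE]; simp
  refine ⟨z13', z24', v12, v23, v14, v34, ?_⟩
  clear hflex hcross hAc hBc h1 h2 h3 h4 eA eB eU eI eD eE uA uB uU uI uD uE cA cB cU cI cD cE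
  simp only [vU, vI, vD, vE]
  split_ifs <;> omega
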